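/- Let q ≥ 2 and let k_1 ≤ k_2 ≤ ⋯ ≤ k_m be positive integers with k_1 ≥ log_q(m) (equivalently m ≤ q^{k_1}). Then (q^{k_1}−1)(q^{k_2}−1)⋯(q^{k_m}−1) ≥ q^{k_1+k_2+⋯+k_m−2}. -/

import Mathlib

lemma aux_bern (a m : ℕ) : a ^ (m+1) + (m+1) * a ^ m ≤ (a+1) ^ (m+1) := by
  induction m with
  | zero => simp [pow_succ]
  | succ n ih =>
    have h2 : (a+1) * (a ^ (n+1) + (n+1) * a ^ n) ≤ (a+1) * (a+1) ^ (n+1) :=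
      Nat.mul_le_mul_left _ ih
    have h3 : a ^ (n+2) + (n+2) * a ^ (n+1) ≤ (a+1) * (a ^ (n+1) + (n+1) * a ^ n) := by
      simp only [pow_succ]
      ring_nf
      nlinarith [Nat.zero_le (a ^ n)]
    calc a ^ (n+2) + (n+2) * a ^ (n+1) ≤ (a+1) * (a+1) ^ (n+1) := le_trans h3 h2
      _ = (a+1) ^ (n+2) := by ring

/-- `(1+1/(n+1))^(n+2)` is decreasing, in integer form. -/
lemma aux_dec (n : ℕ) : (n+2) ^ (n+2) * n ^ (n+1) ≤ (n+1) ^ (2*n+3) := by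
  have hb := aux_bern (n^2 + 2*n) n
  have e1 : (n^2 + 2*n + 1) = (n+1)^2 := by ring
  rw [e1] at hb
  have e2 : (n+1) ^ (2*n+3) = (n+1) * ((n+1)^2) ^ (n+1) := by
    rw [← pow_mul, show 2*n+3 = (2*(n+1)) + 1 from by ring, pow_succ]; ring
  have e3 : (n+2) ^ (n+2) * n ^ (n+1) = (n+2) * (n^2+2*n) ^ (n+1) := by
    rw [show n^2+2*n = (n+2)*n from by ring, mul_pow]; ring
  rw [e2, e3]
  have hA : (n^2+2*n) ^ (n+1) = (n^2+2*n) * (n^2+2*n) ^ n := by ring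
  nlinarith [hb, hA, Nat.zero_le ((n^2+2*n) ^ n)]

/-- `(1+1/n)^(n+1) ≤ 4` for `n ≥ 1`, in integer form. -/
lemma aux_four (n : ℕ) (hn : 1 ≤ n) : (n+1) ^ (n+1) ≤ 4 * n ^ (n+1) := by
  induction n with
  | zero => omega
  | succ p ih =>
    rcases Nat.eq_or_lt_of_le hn with h1 | h1
    · simp [← h1]
    · have hp : 1 ≤ p := by omega
      have ihp := ih hp
      have hdec := aux_dec p
      have c1 : (p+2) ^ (p+2) * p ^ (p+1) ≤ (4 * p ^ (p+1)) * (p+1) ^ (p+2) := by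
        calc (p+2) ^ (p+2) * p ^ (p+1) ≤ (p+1) ^ (2*p+3) := hdec
          _ = (p+1) ^ (p+1) * (p+1) ^ (p+2) := by ring
          _ ≤ (4 * p ^ (p+1)) * (p+1) ^ (p+2) := Nat.mul_le_mul_right _ ihp
      have hpos : 0 < p ^ (p+1) := Nat.pow_pos (by omega)
      have c2 : (p+2) ^ (p+2) ≤ 4 * (p+1) ^ (p+2) := by
        have := Nat.le_of_mul_le_mul_right (by
          calc (p+2) ^ (p+2) * p ^ (p+1) ≤ (4 * p ^ (p+1)) * (p+1) ^ (p+2) := c1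
            _ = (4 * (p+1) ^ (p+2)) * p ^ (p+1) := by ring) hpos
        exact this
      simpa using c2

lemma aux_cross (x y m d : ℕ) (hxy : x ≤ y) : y ^ m * x ^ (m+d) ≤ y ^ (m+d) * x ^ m := by
  rw [pow_add, pow_add]
  calc y ^ m * (x ^ m * x ^ d) = (y ^ m * x ^ m) * x ^ d := by ring
    _ ≤ (y ^ m * x ^ m) * y ^ d := Nat.mul_le_mul_left _ (Nat.pow_le_pow_left hxy d)
    _ = y ^ m * y ^ d * x ^ m := by ring

/-- If `m ≤ b+1` then `(b+1)^m ≤ q^2 * b^m` (for `b ≥ 1`, `q ≥ 2`). -/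
lemma aux_ratio (b m q : ℕ) (hb : 1 ≤ b) (hq : 2 ≤ q) (hm : m ≤ b + 1) :
    (b+1) ^ m ≤ q^2 * b ^ m := by
  have h4 : (b+1) ^ (b+1) ≤ q^2 * b ^ (b+1) := by
    calc (b+1) ^ (b+1) ≤ 4 * b ^ (b+1) := aux_four b hb
      _ ≤ q^2 * b ^ (b+1) := Nat.mul_le_mul_right _ (by nlinarith)
  obtain ⟨d, hd⟩ := Nat.exists_eq_add_of_le hm
  have key : (b+1) ^ m * b ^ (b+1) ≤ (b+1) ^ (b+1) * b ^ m := by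
    have := aux_cross b (b+1) m d (by omega)
    rw [← hd] at this; exact this
  have hbpos : 0 < b ^ (b+1) := Nat.pow_pos (by omega)
  have hfin : (b+1) ^ m * b ^ (b+1) ≤ (q^2 * b ^ m) * b ^ (b+1) := by
    calc (b+1) ^ m * b ^ (b+1) ≤ (b+1) ^ (b+1) * b ^ m := key
      _ ≤ (q^2 * b ^ (b+1)) * b ^ m := Nat.mul_le_mul_right _ h4
      _ = (q^2 * b ^ m) * b ^ (b+1) := by ring
  exact Nat.le_of_mul_le_mul_right hfin hbpos

/-- Let `q ≥ 2` and `k_1 ≤ k_2 ≤ ⋯ ≤ k_m` be positive integers with `m ≤ q^{k_1}`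
(i.e. `k_1 ≥ log_q m`). Then `(q^{k_1}−1)⋯(q^{k_m}−1) ≥ q^{k_1+⋯+k_m−2}`. -/
theorem prod_pow_sub_one_ge (q m : ℕ) (hq : 2 ≤ q) (hm : 0 < m)
    (k : Fin m → ℕ) (hkpos : ∀ i, 0 < k i) (hmono : Monotone k)
    (h : m ≤ q ^ k ⟨0, hm⟩) :
    q ^ (∑ i, k i - 2) ≤ ∏ i, (q ^ k i - 1) := by
  set t := k ⟨0, hm⟩ with ht
  have hks : ∀ i, t ≤ k i := fun i => hmono (by simp [Fin.le_def])
  have hqt : 2 ≤ q ^ t := le_trans hq (Nat.le_self_pow (hkpos _).ne' q)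
  have step1 : ∀ i : Fin m, (q ^ t - 1) * q ^ (k i - t) ≤ q ^ k i - 1 := by
    intro i
    have h1 : (q ^ t - 1) * q ^ (k i - t) = q ^ t * q ^ (k i - t) - q ^ (k i - t) := by
      rw [Nat.sub_mul, one_mul]
    rw [h1, ← pow_add, Nat.add_sub_cancel' (hks i)]
    exact Nat.sub_le_sub_left (Nat.one_le_pow _ _ (by omega)) _
  have hprod1 : ∏ i, ((q ^ t - 1) * q ^ (k i - t)) ≤ ∏ i, (q ^ k i - 1) :=
    Finset.prod_le_prod' (fun i _ => step1 i)
  have hprodeq : ∏ i, ((q ^ t - 1) * q ^ (k i - t))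
      = (q ^ t - 1) ^ m * q ^ (∑ i, (k i - t)) := by
    rw [Finset.prod_mul_distrib, Finset.prod_const, Finset.card_univ, Fintype.card_fin,
      Finset.prod_pow_eq_pow_sum]
  set D := ∑ i, (k i - t) with hD
  have hS : ∑ i, k i = D + m * t := by
    calc ∑ i, k i = ∑ i, ((k i - t) + t) :=
          Finset.sum_congr rfl (fun i _ => (Nat.sub_add_cancel (hks i)).symm)
      _ = D + m * t := by
          rw [Finset.sum_add_distrib, Finset.sum_const, Finset.card_univ, Fintype.card_fin,
            smul_eq_mul]
  have hkey : (q ^ t) ^ m ≤ q ^ 2 * (q ^ t - 1) ^ m := by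
    have := aux_ratio (q ^ t - 1) m q (by omega) hq (by omega)
    rwa [Nat.sub_add_cancel (by omega)] at this
  have main : q ^ (∑ i, k i) ≤ q ^ 2 * ∏ i, (q ^ k i - 1) := by
    calc q ^ (∑ i, k i) = (q ^ t) ^ m * q ^ D := by rw [hS]; ring
      _ ≤ (q ^ 2 * (q ^ t - 1) ^ m) * q ^ D := Nat.mul_le_mul_right _ hkey
      _ = q ^ 2 * ((q ^ t - 1) ^ m * q ^ D) := by ring
      _ = q ^ 2 * ∏ i, ((q ^ t - 1) * q ^ (k i - t)) := by rw [hprodeq]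
      _ ≤ q ^ 2 * ∏ i, (q ^ k i - 1) := Nat.mul_le_mul_left _ hprod1
  rcases le_or_gt 2 (∑ i, k i) with hS2 | hS2
  · have hq2 : 0 < q ^ 2 := Nat.pow_pos (by omega)
    have hfin : q ^ (∑ i, k i - 2) * q ^ 2 ≤ (∏ i, (q ^ k i - 1)) * q ^ 2 := by
      rw [← pow_add, Nat.sub_add_cancel hS2]
      calc q ^ (∑ i, k i) ≤ q ^ 2 * ∏ i, (q ^ k i - 1) := main
        _ = (∏ i, (q ^ k i - 1)) * q ^ 2 := by ring
    exact Nat.le_of_mul_le_mul_right hfin hq2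
  · have h0 : ∑ i, k i - 2 = 0 := by omega
    rw [h0, pow_zero]
    exact Finset.one_le_prod' (fun i _ => by
      have h2 : 2 ≤ q ^ k i := le_trans hq (Nat.le_self_pow (hkpos i).ne' q)
      omega)
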